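/- Let O be a DVR, A = O^n = A_1 × ... × A_s with A_i = O^{n_i}, T ⊆ A a local complete O-subalgebra of full O-rank, and J ⊆ T an ideal of finite index. If J is a principal ideal of T, then #∏_{i=1}^s T_i/J_i = #T/J, where T_i and J_i are the images of T and J under the projection onto A_i. -/

import Mathlib

set_option synthInstance.maxHeartbeats 400000
set_option maxHeartbeats 1000000

/-- The projection `T →ₐ[O] A_i = O^{n_i}` obtained by composing the inclusion of the
subalgebra `T ⊆ A = ∏ i, O^{n_i}` with the canonical projection `φ_i : A → A_i`. -/
noncomputable def projAlgHom {O : Type*} [CommRing O] {s : ℕ} {n : Fin s → ℕ}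
    (T : Subalgebra O (∀ i : Fin s, Fin (n i) → O)) (i : Fin s) :
    T →ₐ[O] (Fin (n i) → O) :=
  (Pi.evalAlgHom O (fun i => Fin (n i) → O) i).comp T.val

section Aux

/-- A DVR is infinite. -/
theorem dvr_infinite {O : Type*} [CommRing O] [IsDomain O] [IsDiscreteValuationRing O] :
    Infinite O := by
  obtain ⟨π, hπ⟩ := IsDiscreteValuationRing.exists_irreducible O
  refine Infinite.of_injective (fun k : ℕ => π ^ k) ?_
  intro a b hab
  simp only at hab
  by_contra hne
  wlog h : a < b generalizing a b
  · exact this hab.symm (Ne.symm hne) (by omega)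
  have hπ0 : π ≠ 0 := hπ.ne_zero
  have : π ^ a * π ^ (b - a) = π ^ a * 1 := by
    rw [mul_one, ← pow_add, hab]
    congr 1
    omega
  have h2 : π ^ (b - a) = 1 := mul_left_cancel₀ (pow_ne_zero a hπ0) this
  exact hπ.not_isUnit (isUnit_of_dvd_one ⟨π ^ (b - a - 1), by rw [← h2, ← pow_succ']; congr 1; omega⟩)

theorem finite_iff_index {R : Type*} [CommRing R] (I : Ideal R) :
    Finite (R ⧸ I) ↔ I.toAddSubgroup.index ≠ 0 := by
  have h : I.toAddSubgroup.index = Nat.card (R ⧸ I) := rfl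
  rw [h]
  exact ⟨fun h2 => (Nat.card_pos_iff.mpr ⟨⟨0⟩, h2⟩).ne',
    fun h2 => (Nat.card_pos_iff.mp (Nat.pos_of_ne_zero h2)).2⟩

/-- Key counting lemma: if `S` is a subalgebra of finite additive index in `R` and `g ∈ S`
is such that multiplication by `g` is injective on `R`, then `#S/(g) = #R/(g)`. -/
theorem core {O R : Type*} [CommRing O] [CommRing R] [Algebra O R] (S : Subalgebra O R)
    (g : S) (hinj : Function.Injective (fun x : R => (g : R) * x))
    (hfin : S.toSubring.toAddSubgroup.index ≠ 0) :
    Nat.card (S ⧸ (Ideal.span {g} : Ideal S)) = Nat.card (R ⧸ Ideal.span {(g : R)}) := by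
  set ι : S →+ R := AddMonoidHom.mk' (fun x => (x : R)) (fun _ _ => rfl) with hι
  set f : R →+ R := AddMonoidHom.mulLeft (g : R) with hf
  have hι_inj : Function.Injective ι := Subtype.coe_injective
  have hι_range : ι.range = S.toSubring.toAddSubgroup := by
    ext x
    simp only [AddMonoidHom.mem_range, hι, AddMonoidHom.mk'_apply,
      Subring.mem_toAddSubgroup, Subalgebra.mem_toSubring]
    exact ⟨by rintro ⟨y, rfl⟩; exact y.2, fun hx => ⟨⟨x, hx⟩, rfl⟩⟩
  have key1 : ((Ideal.span {g} : Ideal S).toAddSubgroup.map ι).index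
      = (Ideal.span {g} : Ideal S).toAddSubgroup.index * S.toSubring.toAddSubgroup.index := by
    rw [AddSubgroup.index_map_of_injective _ hι_inj, hι_range]
  have key2 : (S.toSubring.toAddSubgroup.map f).index
      = S.toSubring.toAddSubgroup.index * f.range.index :=
    AddSubgroup.index_map_of_injective _ hinj
  have eq_sub : (Ideal.span {g} : Ideal S).toAddSubgroup.map ι
      = S.toSubring.toAddSubgroup.map f := by
    ext x
    simp only [AddSubgroup.mem_map, Submodule.mem_toAddSubgroup,
      Subring.mem_toAddSubgroup, Subalgebra.mem_toSubring, hι, hf, AddMonoidHom.mk'_apply,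
      AddMonoidHom.coe_mulLeft]
    constructor
    · rintro ⟨y, hy, rfl⟩
      rw [Ideal.mem_span_singleton'] at hy
      obtain ⟨c, rfl⟩ := hy
      exact ⟨c, c.2, by push_cast; ring⟩
    · rintro ⟨r, hr, rfl⟩
      refine ⟨(⟨r, hr⟩ : S) * g, ?_, by push_cast; ring⟩
      rw [Ideal.mem_span_singleton']
      exact ⟨⟨r, hr⟩, rfl⟩
  have range_eq : f.range = (Ideal.span {(g : R)}).toAddSubgroup := by
    ext x
    simp only [AddMonoidHom.mem_range, hf, AddMonoidHom.coe_mulLeft,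
      Submodule.mem_toAddSubgroup, Ideal.mem_span_singleton']
    constructor
    · rintro ⟨y, rfl⟩; exact ⟨y, mul_comm y _⟩
    · rintro ⟨y, rfl⟩; exact ⟨y, mul_comm _ y⟩
  have main : (Ideal.span {g} : Ideal S).toAddSubgroup.index * S.toSubring.toAddSubgroup.index
      = S.toSubring.toAddSubgroup.index * (Ideal.span {(g : R)}).toAddSubgroup.index := by
    rw [← key1, eq_sub, key2, range_eq]
  have e1 : Nat.card (S ⧸ (Ideal.span {g} : Ideal S))
      = (Ideal.span {g} : Ideal S).toAddSubgroup.index := rfl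
  have e2 : Nat.card (R ⧸ Ideal.span {(g : R)})
      = (Ideal.span {(g : R)}).toAddSubgroup.index := rfl
  rw [e1, e2]
  exact Nat.eq_of_mul_eq_mul_left (Nat.pos_of_ne_zero hfin)
    (by rw [mul_comm] at main; rw [main])

/-- The quotient of a finite product of rings by the principal ideal generated by `t`
is the product of the quotients by the coordinates of `t`. -/
noncomputable def piSpanQuotEquiv {ι : Type*} [Fintype ι] (R : ι → Type*) [∀ i, CommRing (R i)]
    (t : ∀ i, R i) :
    ((∀ i, R i) ⧸ Ideal.span {t}) ≃+* ∀ i, R i ⧸ Ideal.span {t i} := by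
  have hφ : ∃ φ : (∀ i, R i) →+* ∀ i, R i ⧸ Ideal.span {t i},
      ∀ x i, φ x i = Ideal.Quotient.mk (Ideal.span {t i}) (x i) :=
    ⟨Pi.ringHom (fun i => (Ideal.Quotient.mk (Ideal.span {t i})).comp (Pi.evalRingHom R i)),
      fun _ _ => rfl⟩
  choose φ hφ using hφ
  have hsurj : Function.Surjective φ := by
    intro y
    choose x hx using fun i => Ideal.Quotient.mk_surjective (y i)
    exact ⟨x, by funext i; rw [hφ]; exact hx i⟩
  have hker : RingHom.ker φ = Ideal.span {t} := by
    ext x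
    simp only [RingHom.mem_ker, Ideal.mem_span_singleton']
    constructor
    · intro hx
      have h : ∀ i, ∃ c, c * t i = x i := by
        intro i
        have := congrFun hx i
        rw [hφ] at this
        rw [← Ideal.mem_span_singleton']
        exact (Ideal.Quotient.eq_zero_iff_mem).mp (by simpa using this)
      choose c hc using h
      exact ⟨c, funext hc⟩
    · rintro ⟨c, rfl⟩
      funext i
      rw [hφ]
      simp only [Pi.zero_apply]
      rw [Ideal.Quotient.eq_zero_iff_mem]
      exact Ideal.mem_span_singleton'.mpr ⟨c i, rfl⟩
  exact (Ideal.quotEquivOfEq hker.symm).trans (RingHom.quotientKerEquivOfSurjective hsurj)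

theorem finite_pi_quot {ι : Type*} [Fintype ι] (R : ι → Type*) [∀ i, CommRing (R i)]
    (t : ∀ i, R i) (h : ∀ i, Finite (R i ⧸ Ideal.span {t i})) :
    Finite ((∀ i, R i) ⧸ Ideal.span {t}) := by
  haveI := h
  exact Finite.of_equiv _ (piSpanQuotEquiv R t).toEquiv.symm

theorem finite_quot_mul {R : Type*} [CommRing R] [IsDomain R] {a b : R} (ha : a ≠ 0)
    (hfa : Finite (R ⧸ Ideal.span {a})) (hfb : Finite (R ⧸ Ideal.span {b})) :
    Finite (R ⧸ Ideal.span {a * b}) := by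
  rw [finite_iff_index] at *
  set f : R →+ R := AddMonoidHom.mulLeft a with hf
  have hinj : Function.Injective f := fun x y hxy => mul_left_cancel₀ ha hxy
  have hmap : (Ideal.span {b}).toAddSubgroup.map f = (Ideal.span {a * b}).toAddSubgroup := by
    ext x
    simp only [AddSubgroup.mem_map, Submodule.mem_toAddSubgroup, Ideal.mem_span_singleton',
      hf, AddMonoidHom.coe_mulLeft]
    constructor
    · rintro ⟨y, ⟨c, rfl⟩, rfl⟩; exact ⟨c, by ring⟩
    · rintro ⟨c, rfl⟩; exact ⟨c * b, ⟨c, rfl⟩, by ring⟩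
  have hrange : f.range = (Ideal.span {a}).toAddSubgroup := by
    ext x
    simp only [AddMonoidHom.mem_range, hf, AddMonoidHom.coe_mulLeft,
      Submodule.mem_toAddSubgroup, Ideal.mem_span_singleton']
    exact ⟨fun ⟨y, hy⟩ => ⟨y, by rw [← hy]; ring⟩, fun ⟨y, hy⟩ => ⟨y, by rw [← hy]; ring⟩⟩
  rw [← hmap, AddSubgroup.index_map_of_injective _ hinj, hrange]
  exact mul_ne_zero hfb hfa

theorem finite_quot_all {O : Type*} [CommRing O] [IsDomain O] [IsDiscreteValuationRing O]
    {d : O} (hd0 : d ≠ 0) (hdu : ¬IsUnit d) (hfin : Finite (O ⧸ Ideal.span {d}))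
    {c : O} (hc : c ≠ 0) : Finite (O ⧸ Ideal.span {c}) := by
  have hpow : ∀ m : ℕ, Finite (O ⧸ Ideal.span {d ^ m}) := by
    intro m
    induction m with
    | zero =>
      simp only [pow_zero, Ideal.span_singleton_one]
      have : Subsingleton (O ⧸ (⊤ : Ideal O)) := Ideal.Quotient.subsingleton_iff.mpr rfl
      exact Finite.of_subsingleton
    | succ m ih =>
      rw [pow_succ']
      exact finite_quot_mul hd0 hfin ih
  obtain ⟨π, hπ⟩ := IsDiscreteValuationRing.exists_irreducible O
  obtain ⟨k, u, hdk⟩ := IsDiscreteValuationRing.eq_unit_mul_pow_irreducible hd0 hπ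
  obtain ⟨m, v, hcm⟩ := IsDiscreteValuationRing.eq_unit_mul_pow_irreducible hc hπ
  have hk : 1 ≤ k := by
    rcases Nat.eq_zero_or_pos k with hk0 | hk0
    · exfalso; apply hdu; rw [hdk, hk0, pow_zero, mul_one]; exact u.isUnit
    · exact hk0
  have hdvd : c ∣ d ^ m := by
    rw [hdk, hcm, mul_pow, ← pow_mul]
    refine mul_dvd_mul v.isUnit.dvd (pow_dvd_pow π ?_)
    calc m = m * 1 := (mul_one m).symm
    _ ≤ m * k := Nat.mul_le_mul_left m hk
    _ = k * m := Nat.mul_comm m k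
  have hle : Ideal.span {d ^ m} ≤ Ideal.span {c} :=
    Ideal.span_singleton_le_span_singleton.mpr hdvd
  have := hpow m
  refine Finite.of_surjective (Ideal.Quotient.factor hle) ?_
  intro y
  obtain ⟨x, rfl⟩ := Ideal.Quotient.mk_surjective y
  exact ⟨Ideal.Quotient.mk _ x, rfl⟩

theorem pi_decomp {O : Type*} [CommRing O] {s : ℕ} {n : Fin s → ℕ}
    (a : ∀ i : Fin s, Fin (n i) → O) :
    a = ∑ q : (Σ i : Fin s, Fin (n i)),
      a q.1 q.2 • (Pi.single q.1 (Pi.single q.2 (1 : O)) : ∀ i : Fin s, Fin (n i) → O) := by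
  rw [← Finset.univ_sigma_univ, Finset.sum_sigma]
  funext i j
  rw [Finset.sum_apply, Finset.sum_apply]
  rw [Finset.sum_eq_single i]
  · rw [Finset.sum_apply, Finset.sum_apply]
    rw [Finset.sum_eq_single j]
    · simp
    · intro b _ hb
      simp [Pi.single_eq_of_ne hb.symm]
    · intro h; exact absurd (Finset.mem_univ j) h
  · intro b _ hb
    rw [Finset.sum_apply, Finset.sum_apply]
    apply Finset.sum_eq_zero
    intro x _
    simp [Pi.single_eq_of_ne hb.symm]
  · intro h; exact absurd (Finset.mem_univ i) h

end Aux

/-- Proposition: with `O` a DVR, `A = ∏_{i=1}^s O^{n_i}`, `T ⊆ A` a local complete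
`O`-subalgebra of full rank and `J ⊆ T` an ideal of finite index, if `J` is principal
then `#∏_{i=1}^s T_i/J_i = #T/J`, where `T_i = φ_i(T)` and `J_i = φ_i(J)`. -/
theorem prod_card_quot_eq_card_quot_of_principal
    {O : Type*} [CommRing O] [IsDomain O] [IsDiscreteValuationRing O]
    {s : ℕ} {n : Fin s → ℕ} (hn : ∀ i, 0 < n i)
    (T : Subalgebra O (∀ i : Fin s, Fin (n i) → O))
    [IsLocalRing T] [IsAdicComplete (IsLocalRing.maximalIdeal T) T]
    (hfull : ∀ a : (∀ i : Fin s, Fin (n i) → O), ∃ c : O, c ≠ 0 ∧ c • a ∈ T)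
    (J : Ideal T) [Finite (T ⧸ J)] (hJ : J.IsPrincipal) :
    ∏ i : Fin s, Nat.card
        ((projAlgHom T i).range ⧸ Ideal.map (projAlgHom T i).rangeRestrict J)
      = Nat.card (T ⧸ J) := by
  classical
  haveI : Infinite O := dvr_infinite
  obtain ⟨g, hgJ⟩ := hJ
  have hgJ' : J = Ideal.span {g} := hgJ
  rcases eq_or_ne J ⊤ with hTop | hTop
  · subst hTop
    have h1 : Nat.card (T ⧸ (⊤ : Ideal T)) = 1 := by
      haveI : Subsingleton (T ⧸ (⊤ : Ideal T)) := Ideal.Quotient.subsingleton_iff.mpr rfl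
      exact Nat.card_of_subsingleton (Ideal.Quotient.mk ⊤ 0)
    have h2 : ∀ i : Fin s, Nat.card
        ((projAlgHom T i).range ⧸ Ideal.map (projAlgHom T i).rangeRestrict (⊤ : Ideal T)) = 1 := by
      intro i
      rw [Ideal.map_top]
      haveI : Subsingleton ((projAlgHom T i).range ⧸ (⊤ : Ideal (projAlgHom T i).range)) :=
        Ideal.Quotient.subsingleton_iff.mpr rfl
      exact Nat.card_of_subsingleton (Ideal.Quotient.mk ⊤ 0)
    rw [h1, Finset.prod_congr rfl (fun i _ => h2 i), Finset.prod_const_one]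
  -- main case
  · set e : (Σ i : Fin s, Fin (n i)) → (∀ i : Fin s, Fin (n i) → O) :=
      fun q => Pi.single q.1 (Pi.single q.2 (1 : O)) with hedef
    -- coordinates of the generator are nonzero
    have hcoord : ∀ (i : Fin s) (j : Fin (n i)), (g : ∀ i : Fin s, Fin (n i) → O) i j ≠ 0 := by
      intro i j h0
      obtain ⟨c₀, hc₀, hw⟩ := hfull (e ⟨i, j⟩)
      have hinj : Function.Injective
          (fun c : O => Ideal.Quotient.mk J (c • (⟨c₀ • e ⟨i, j⟩, hw⟩ : T))) := by
        intro c c' hcc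
        simp only at hcc
        have hmem : (c - c') • (⟨c₀ • e ⟨i, j⟩, hw⟩ : T) ∈ J := by
          rw [sub_smul]
          exact Ideal.Quotient.eq.mp hcc
        rw [hgJ'] at hmem
        obtain ⟨x, hx⟩ := Ideal.mem_span_singleton'.mp hmem
        have hx' : (x : ∀ i : Fin s, Fin (n i) → O) * (g : ∀ i : Fin s, Fin (n i) → O)
            = (c - c') • (c₀ • e ⟨i, j⟩) := congrArg Subtype.val hx
        have hv := congrFun (congrFun hx' i) j
        simp only [Pi.mul_apply] at hv
        rw [h0, mul_zero] at hv
        simp only [hedef, Pi.smul_apply, smul_eq_mul, Pi.single_eq_same, mul_one] at hv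
        have hz : (c - c') * c₀ = 0 := hv.symm
        rcases mul_eq_zero.mp hz with h | h
        · exact sub_eq_zero.mp h
        · exact absurd h hc₀
      exact (Finite.of_injective _ hinj).not_infinite inferInstance
    -- a global denominator c
    have hsig : ∀ q : Σ i : Fin s, Fin (n i), ∃ c : O, c ≠ 0 ∧ c • e q ∈ T :=
      fun q => hfull _
    choose cf hcf0 hcfT using hsig
    set c : O := ∏ q : Σ i : Fin s, Fin (n i), cf q with hcdef
    have hc0 : c ≠ 0 := Finset.prod_ne_zero_iff.mpr (fun q _ => hcf0 q)
    have hcT : ∀ a : ∀ i : Fin s, Fin (n i) → O, c • a ∈ T := by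
      intro a
      have hdec := pi_decomp a
      rw [hedef] at *
      rw [hdec, Finset.smul_sum]
      apply sum_mem
      intro q _
      rw [smul_comm]
      apply Subalgebra.smul_mem
      rw [hcdef, ← Finset.mul_prod_erase _ _ (Finset.mem_univ q), mul_comm, mul_smul]
      exact Subalgebra.smul_mem T (hcfT q) _
    -- a nonzero nonunit d with finite quotient
    haveI hnontriv : Nontrivial (T ⧸ J) := Ideal.Quotient.nontrivial_iff.mpr hTop
    set ρ : O →+* T ⧸ J := (Ideal.Quotient.mk J).comp (algebraMap O T) with hρ
    obtain ⟨d, hd⟩ := Submodule.IsPrincipal.principal (RingHom.ker ρ)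
    have hd' : RingHom.ker ρ = Ideal.span {d} := hd
    have hd0 : d ≠ 0 := by
      rintro rfl
      have hker : RingHom.ker ρ = ⊥ := by
        rw [hd']; exact Ideal.span_singleton_eq_bot.mpr rfl
      have hinj : Function.Injective ρ := (RingHom.injective_iff_ker_eq_bot ρ).mpr hker
      exact (Finite.of_injective ρ hinj).not_infinite inferInstance
    have hdu : ¬ IsUnit d := by
      intro hu
      have hker : RingHom.ker ρ = ⊤ := by
        rw [hd']; exact Ideal.span_singleton_eq_top.mpr hu
      have hmem1 : (1 : O) ∈ RingHom.ker ρ := by rw [hker]; exact Submodule.mem_top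
      rw [RingHom.mem_ker, map_one] at hmem1
      have h1J : Ideal.Quotient.mk J (1 : T) = 0 := by simpa using hmem1
      exact (Ideal.ne_top_iff_one J).mp hTop (Ideal.Quotient.eq_zero_iff_mem.mp h1J)
    have hdfin : Finite (O ⧸ Ideal.span {d}) := by
      rw [← hd']
      exact Finite.of_equiv _ (RingHom.quotientKerEquivRange ρ).toEquiv.symm
    have hOfin : ∀ c' : O, c' ≠ 0 → Finite (O ⧸ Ideal.span {c'}) :=
      fun c' hc' => finite_quot_all hd0 hdu hdfin hc'
    -- finite index of T in A
    have hTidx : T.toSubring.toAddSubgroup.index ≠ 0 := by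
      have hCfin : Finite ((∀ i : Fin s, Fin (n i) → O) ⧸
          Ideal.span {(fun _ _ => c : ∀ i : Fin s, Fin (n i) → O)}) := by
        apply finite_pi_quot
        intro i
        exact finite_pi_quot (fun _ : Fin (n i) => O) (fun _ => c) (fun _ => hOfin c hc0)
      have hle : (Ideal.span {(fun _ _ => c : ∀ i : Fin s, Fin (n i) → O)}).toAddSubgroup
          ≤ T.toSubring.toAddSubgroup := by
        intro x hx
        obtain ⟨y, hy⟩ := Ideal.mem_span_singleton'.mp hx
        have hxy : x = c • y := by
          rw [← hy]; funext i j
          simp only [Pi.mul_apply, Pi.smul_apply, smul_eq_mul]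
          ring
        show x ∈ T
        rw [hxy]
        exact hcT y
      have h1 := (finite_iff_index _).mp hCfin
      intro h0
      have hdvd := AddSubgroup.index_dvd_of_le hle
      rw [h0] at hdvd
      exact h1 (zero_dvd_iff.mp hdvd)
    -- finite index of T_i in A_i
    have hTiidx : ∀ i : Fin s,
        ((projAlgHom T i).range).toSubring.toAddSubgroup.index ≠ 0 := by
      intro i
      have hCifin : Finite ((Fin (n i) → O) ⧸ Ideal.span {(fun _ => c : Fin (n i) → O)}) :=
        finite_pi_quot (fun _ : Fin (n i) => O) (fun _ => c) (fun _ => hOfin c hc0)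
      have hle : (Ideal.span {(fun _ => c : Fin (n i) → O)}).toAddSubgroup ≤
          ((projAlgHom T i).range).toSubring.toAddSubgroup := by
        intro x hx
        obtain ⟨y, hy⟩ := Ideal.mem_span_singleton'.mp hx
        show x ∈ (projAlgHom T i).range
        rw [AlgHom.mem_range]
        have hmemT := hcT (Pi.single (M := fun i : Fin s => Fin (n i) → O) i y)
        refine ⟨⟨_, hmemT⟩, ?_⟩
        show (c • Pi.single (M := fun i : Fin s => Fin (n i) → O) i y) i = x
        rw [← hy]
        funext j
        simp only [Pi.smul_apply, Pi.single_eq_same, smul_eq_mul, Pi.mul_apply]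
        ring
      have h1 := (finite_iff_index _).mp hCifin
      intro h0
      have hdvd := AddSubgroup.index_dvd_of_le hle
      rw [h0] at hdvd
      exact h1 (zero_dvd_iff.mp hdvd)
    -- injectivity of multiplication by g
    have hinjA : Function.Injective
        (fun x : ∀ i : Fin s, Fin (n i) → O => ((g : ∀ i : Fin s, Fin (n i) → O)) * x) := by
      intro x y hxy
      simp only at hxy
      funext i j
      exact mul_left_cancel₀ (hcoord i j) (congrFun (congrFun hxy i) j)
    have hinjAi : ∀ i : Fin s, Function.Injective
        (fun x : Fin (n i) → O => ((g : ∀ i : Fin s, Fin (n i) → O) i) * x) := by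
      intro i x y hxy
      simp only at hxy
      funext j
      exact mul_left_cancel₀ (hcoord i j) (congrFun hxy j)
    -- the images of J
    have hmap : ∀ i : Fin s, Ideal.map (projAlgHom T i).rangeRestrict J
        = Ideal.span {(projAlgHom T i).rangeRestrict g} := by
      intro i
      rw [hgJ', Ideal.map_span, Set.image_singleton]
    calc (∏ i : Fin s, Nat.card
          ((projAlgHom T i).range ⧸ Ideal.map (projAlgHom T i).rangeRestrict J))
        = ∏ i : Fin s, Nat.card
          ((Fin (n i) → O) ⧸ Ideal.span {(g : ∀ i : Fin s, Fin (n i) → O) i}) := by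
          refine Finset.prod_congr rfl (fun i _ => ?_)
          rw [hmap i]
          exact core ((projAlgHom T i).range) ((projAlgHom T i).rangeRestrict g)
            (hinjAi i) (hTiidx i)
      _ = Nat.card ((∀ i : Fin s, Fin (n i) → O) ⧸
            Ideal.span {(g : ∀ i : Fin s, Fin (n i) → O)}) := by
          rw [← Nat.card_pi]
          exact (Nat.card_congr (piSpanQuotEquiv _ (g : ∀ i : Fin s, Fin (n i) → O)).toEquiv).symm
      _ = Nat.card (T ⧸ J) := by
          rw [hgJ']
          exact (core T g hinjA hTidx).symm
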